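/- Let H be a finite-dimensional real inner product space, β > 0, and f_n : H → ℝ (n = 1,…,N) differentiable with β-Lipschitz gradient; set f = (1/N) Σ_{n=1}^N f_n. Let 0 < γ ≤ 1/β and σ ≥ 0. Let (Ω, ℱ, P) be a probability space, 𝒢 ⊆ ℱ a sub-σ-algebra, and w_n : Ω → H (n = 1,…,N) square-integrable 𝒢-measurable random vectors; set w̄ = (1/N) Σ_n w_n. Let g_n : Ω → H be square-integrable random vectors with E[g_n | 𝒢] = ∇f_n(w_n) almost surely for each n, and E[‖(1/N) Σ_n (g_n − ∇f_n(w_n))‖²] ≤ σ²/N. Define w̄⁺ = w̄ − γ (1/N) Σ_n g_n, and assume f(w̄) and f(w̄⁺) are integrable. Then E[f(w̄⁺)] ≤ E[f(w̄)] − (γ/2) E[‖∇f(w̄)‖²] + β γ² σ²/(2N) + (γ/2) E[‖∇f(w̄) − (1/N) Σ_n ∇f_n(w_n)‖²]. -/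

import Mathlib

open MeasureTheory Finset

section AuxHSFL

open InnerProductSpace

variable {H : Type*} [NormedAddCommGroup H] [InnerProductSpace ℝ H] [FiniteDimensional ℝ H]

/-- gradient of the average. -/
lemma grad_avg {N : ℕ} (f : Fin N → H → ℝ) (hdiff : ∀ n, Differentiable ℝ (f n)) (x : H) :
    HasGradientAt (fun x => (N : ℝ)⁻¹ * ∑ n, f n x) ((N : ℝ)⁻¹ • ∑ n, gradient (f n) x) x := by
  have h : ∀ n : Fin N, HasFDerivAt (f n) (toDual ℝ H (gradient (f n) x)) x :=
    fun n => ((hdiff n) x).hasGradientAt.hasFDerivAt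
  have hsum : HasFDerivAt (fun x => ∑ n, f n x)
      (∑ n, toDual ℝ H (gradient (f n) x)) x := HasFDerivAt.fun_sum (fun n _ => h n)
  have hmul := hsum.const_mul ((N : ℝ)⁻¹)
  rw [hasFDerivAt_iff_hasGradientAt] at hmul
  convert hmul using 1
  simp [_root_.map_smul, _root_.map_sum]
  rfl

/-- Descent lemma: quadratic upper bound for a function with Lipschitz gradient. -/
lemma descent_lemma {F : H → ℝ} {G : H → H} {β : ℝ}
    (hgrad : ∀ x, HasGradientAt F (G x) x)
    (hlip : ∀ u v, ‖G u - G v‖ ≤ β * ‖u - v‖) (x y : H) :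
    F y ≤ F x + ⟪G x, y - x⟫_ℝ + β / 2 * ‖y - x‖ ^ 2 := by
  set v := y - x with hv
  set φ : ℝ → ℝ := fun t => F (x + t • v) - t * ⟪G x, v⟫_ℝ - β * t ^ 2 / 2 * ‖v‖ ^ 2 with hφdef
  have hφ : ∀ t : ℝ, HasDerivAt φ
      (⟪G (x + t • v), v⟫_ℝ - ⟪G x, v⟫_ℝ - β * t * ‖v‖ ^ 2) t := by
    intro t
    have hline : HasDerivAt (fun t : ℝ => x + t • v) v t := by
      simpa using ((hasDerivAt_id t).smul_const v).const_add x
    have h1 : HasDerivAt (fun t : ℝ => F (x + t • v)) (⟪G (x + t • v), v⟫_ℝ) t := by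
      have := (hgrad (x + t • v)).hasFDerivAt.comp_hasDerivAt t hline
      simpa [InnerProductSpace.toDual_apply_apply, Function.comp_def] using this
    have h2 : HasDerivAt (fun t : ℝ => t * ⟪G x, v⟫_ℝ) (⟪G x, v⟫_ℝ) t :=
      hasDerivAt_mul_const _
    have h3 : HasDerivAt (fun t : ℝ => β * t ^ 2 / 2 * ‖v‖ ^ 2) (β * t * ‖v‖ ^ 2) t := by
      have h3' := (hasDerivAt_pow 2 t).const_mul (β / 2 * ‖v‖ ^ 2)
      have heq : (fun t : ℝ => β * t ^ 2 / 2 * ‖v‖ ^ 2)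
          = fun t : ℝ => β / 2 * ‖v‖ ^ 2 * t ^ 2 := by funext s; ring
      rw [heq]
      refine h3'.congr_deriv ?_
      push_cast
      ring
    exact (h1.sub h2).sub h3
  have hdiff : Differentiable ℝ φ := fun t => (hφ t).differentiableAt
  have hanti : AntitoneOn φ (Set.Icc 0 1) := by
    refine antitoneOn_of_deriv_nonpos (convex_Icc 0 1) hdiff.continuous.continuousOn
      (hdiff.differentiableOn) ?_
    intro t ht
    rw [interior_Icc] at ht
    rw [(hφ t).deriv]
    have ht0 : (0:ℝ) ≤ t := le_of_lt ht.1
    have hb : ⟪G (x + t • v), v⟫_ℝ - ⟪G x, v⟫_ℝ ≤ β * t * ‖v‖ ^ 2 := by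
      rw [← inner_sub_left]
      calc ⟪G (x + t • v) - G x, v⟫_ℝ ≤ ‖G (x + t • v) - G x‖ * ‖v‖ :=
            real_inner_le_norm _ _
        _ ≤ (β * ‖(x + t • v) - x‖) * ‖v‖ := by
            gcongr; exact hlip _ _
        _ = β * t * ‖v‖ ^ 2 := by
            simp [norm_smul, abs_of_nonneg ht0]; ring
    linarith
  have h01 := hanti (Set.left_mem_Icc.2 zero_le_one) (Set.right_mem_Icc.2 zero_le_one)
    zero_le_one
  have hxy : x + v = y := by rw [hv]; abel
  simp only [hφdef, one_smul, zero_smul, add_zero, one_pow, hxy] at h01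
  norm_num at h01
  linarith

section Prob

variable {Ω : Type*} {mΩ : MeasurableSpace Ω} {P : Measure Ω} [IsProbabilityMeasure P]
  {m𝒢 : MeasurableSpace Ω}

lemma l2_integrable_mul {X Y : Ω → ℝ} (hX : MemLp X 2 P) (hY : MemLp Y 2 P) :
    Integrable (fun ω => X ω * Y ω) P := by
  have h := hY.smul (φ := X) hX (r := 1)
  rw [memLp_one_iff_integrable] at h
  exact h

lemma l2_integrable_inner {X Y : Ω → H} (hX : MemLp X 2 P) (hY : MemLp Y 2 P) :
    Integrable (fun ω => ⟪X ω, Y ω⟫_ℝ) P := by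
  refine (l2_integrable_mul (hX.norm) (hY.norm)).mono
    (AEStronglyMeasurable.inner (𝕜 := ℝ) hX.1 hY.1) ?_
  filter_upwards with ω
  simpa [abs_of_nonneg (mul_nonneg (norm_nonneg _) (norm_nonneg _))] using
    abs_real_inner_le_norm (X ω) (Y ω)

lemma condexp_const_inner (hm𝒢 : m𝒢 ≤ mΩ) {Y : Ω → H} (hY : Integrable Y P) (c : H) :
    P[fun ω => ⟪c, Y ω⟫_ℝ | m𝒢] =ᵐ[P] fun ω => ⟪c, (P[Y | m𝒢]) ω⟫_ℝ := by
  haveI : SigmaFinite (P.trim hm𝒢) := by infer_instance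
  refine (ae_eq_condExp_of_forall_setIntegral_eq hm𝒢 (hY.const_inner c) ?_ ?_ ?_).symm
  · intro s _ _
    exact (Integrable.const_inner (𝕜 := ℝ) c
      (integrable_condExp (μ := P) (m := m𝒢) (f := Y))).restrict
  · intro s hs _
    rw [integral_inner ((integrable_condExp (μ := P) (m := m𝒢) (f := Y)).restrict) c,
      integral_inner (hY.restrict) c, setIntegral_condExp hm𝒢 hY hs]
  · have hsm : StronglyMeasurable[m𝒢] (fun ω => ⟪c, (P[Y | m𝒢]) ω⟫_ℝ) :=
      StronglyMeasurable.inner stronglyMeasurable_const stronglyMeasurable_condExp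
    exact hsm.aestronglyMeasurable

lemma integral_mul_eq_integral_mul_condexp (hm𝒢 : m𝒢 ≤ mΩ) {X Y : Ω → ℝ}
    (hXm : StronglyMeasurable[m𝒢] X) (hX : MemLp X 2 P) (hY : MemLp Y 2 P) :
    ∫ ω, X ω * Y ω ∂P = ∫ ω, X ω * (P[Y | m𝒢]) ω ∂P := by
  haveI : SigmaFinite (P.trim hm𝒢) := by infer_instance
  have hXY : Integrable (fun ω => X ω * Y ω) P := l2_integrable_mul hX hY
  rw [← integral_condExp hm𝒢 (f := fun ω => X ω * Y ω)]
  refine integral_congr_ae ?_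
  exact
    condExp_mul_of_stronglyMeasurable_left hXm hXY (hY.integrable one_le_two)

lemma integral_inner_eq_of_condexp (hm𝒢 : m𝒢 ≤ mΩ) {X Y h : Ω → H}
    (hXm : StronglyMeasurable[m𝒢] X) (hX : MemLp X 2 P) (hY : MemLp Y 2 P)
    (hh : MemLp h 2 P) (hcond : P[Y | m𝒢] =ᵐ[P] h) :
    ∫ ω, ⟪X ω, Y ω⟫_ℝ ∂P = ∫ ω, ⟪X ω, h ω⟫_ℝ ∂P := by
  haveI : SigmaFinite (P.trim hm𝒢) := by infer_instance
  set b := stdOrthonormalBasis ℝ H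
  have key : ∀ i, ∫ ω, ⟪X ω, b i⟫_ℝ * ⟪b i, Y ω⟫_ℝ ∂P
      = ∫ ω, ⟪X ω, b i⟫_ℝ * ⟪b i, h ω⟫_ℝ ∂P := by
    intro i
    rw [integral_mul_eq_integral_mul_condexp hm𝒢
      (hXm.inner stronglyMeasurable_const) (hX.inner_const _) (hY.const_inner _)]
    refine integral_congr_ae ?_
    have h1 := condexp_const_inner hm𝒢 (hY.integrable one_le_two) (b i)
    have h2 : (fun ω => ⟪b i, (P[Y | m𝒢]) ω⟫_ℝ) =ᵐ[P] fun ω => ⟪b i, h ω⟫_ℝ :=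
      hcond.mono fun ω hω => by
        show ⟪b i, (P[Y | m𝒢]) ω⟫_ℝ = ⟪b i, h ω⟫_ℝ
        rw [hω]
    filter_upwards [h1.trans h2] with ω hω
    rw [hω]
  calc ∫ ω, ⟪X ω, Y ω⟫_ℝ ∂P
      = ∫ ω, ∑ i, ⟪X ω, b i⟫_ℝ * ⟪b i, Y ω⟫_ℝ ∂P :=
        integral_congr_ae (Filter.Eventually.of_forall fun ω =>
          (b.sum_inner_mul_inner _ _).symm)
    _ = ∑ i, ∫ ω, ⟪X ω, b i⟫_ℝ * ⟪b i, Y ω⟫_ℝ ∂P :=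
        integral_finset_sum _ fun i _ =>
          l2_integrable_mul (hX.inner_const _) (hY.const_inner _)
    _ = ∑ i, ∫ ω, ⟪X ω, b i⟫_ℝ * ⟪b i, h ω⟫_ℝ ∂P := by
        exact Finset.sum_congr rfl fun i _ => key i
    _ = ∫ ω, ∑ i, ⟪X ω, b i⟫_ℝ * ⟪b i, h ω⟫_ℝ ∂P :=
        (integral_finset_sum _ fun i _ =>
          l2_integrable_mul (hX.inner_const _) (hh.const_inner _)).symm
    _ = ∫ ω, ⟪X ω, h ω⟫_ℝ ∂P :=
        integral_congr_ae (Filter.Eventually.of_forall fun ω =>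
          b.sum_inner_mul_inner _ _)

end Prob

theorem aux_descent {H : Type*} [NormedAddCommGroup H] [InnerProductSpace ℝ H]
    [FiniteDimensional ℝ H]
    {β γ σ2N : ℝ} (hβ : 0 < β) (hγ0 : 0 < γ) (hγβ : γ ≤ 1 / β)
    {Ω : Type*} {mΩ : MeasurableSpace Ω} {P : Measure Ω} [IsProbabilityMeasure P]
    {m𝒢 : MeasurableSpace Ω} (hm𝒢 : m𝒢 ≤ mΩ)
    {F : H → ℝ} {GF : H → H}
    (hgrad : ∀ x, HasGradientAt F (GF x) x)
    (hlip : ∀ u v, ‖GF u - GF v‖ ≤ β * ‖u - v‖)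
    {W Gf Hb : Ω → H}
    (hW_sm : StronglyMeasurable[m𝒢] W) (hW2 : MemLp W 2 P)
    (hG2 : MemLp Gf 2 P)
    (hHb_sm : StronglyMeasurable[m𝒢] Hb) (hHb2 : MemLp Hb 2 P)
    (hGcond : P[Gf | m𝒢] =ᵐ[P] Hb)
    (hvar : ∫ ω, ‖Gf ω - Hb ω‖ ^ 2 ∂P ≤ σ2N)
    (hint1 : Integrable (fun ω => F (W ω)) P)
    (hint2 : Integrable (fun ω => F (W ω - γ • Gf ω)) P) :
    ∫ ω, F (W ω - γ • Gf ω) ∂P ≤ (∫ ω, F (W ω) ∂P)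
      - γ / 2 * ∫ ω, ‖GF (W ω)‖ ^ 2 ∂P
      + β * γ ^ 2 * σ2N / 2
      + γ / 2 * ∫ ω, ‖GF (W ω) - Hb ω‖ ^ 2 ∂P := by
  haveI : SigmaFinite (P.trim hm𝒢) := by infer_instance
  -- continuity and L² of `GF ∘ W`
  have hGFcont : Continuous GF := by
    have : LipschitzWith (Real.toNNReal β) GF := by
      refine LipschitzWith.of_dist_le_mul fun u v => ?_
      rw [dist_eq_norm, dist_eq_norm, Real.coe_toNNReal β hβ.le]
      exact hlip u v
    exact this.continuous
  have hX_sm : StronglyMeasurable[m𝒢] (fun ω => GF (W ω)) :=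
    hGFcont.comp_stronglyMeasurable hW_sm
  have hX_aesm : AEStronglyMeasurable[mΩ] (fun ω => GF (W ω)) P :=
    (hX_sm.mono hm𝒢).aestronglyMeasurable
  have hX2 : MemLp (fun ω => GF (W ω)) 2 P := by
    have h1 : MemLp (fun ω => GF (W ω) - GF 0) 2 P := by
      refine hW2.of_le_mul (c := β) (hX_aesm.sub aestronglyMeasurable_const)
        (Filter.Eventually.of_forall fun ω => ?_)
      simpa using hlip (W ω) 0
    have h2 := h1.add (memLp_const (GF 0))
    have : (fun ω => GF (W ω) - GF 0) + (fun _ => GF 0) = fun ω => GF (W ω) := by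
      funext ω; simp
    rwa [this] at h2
  -- the noise term
  have he2 : MemLp (fun ω => Gf ω - Hb ω) 2 P := hG2.sub hHb2
  have hHbcond : P[Hb | m𝒢] = Hb :=
    condExp_of_stronglyMeasurable hm𝒢 hHb_sm (hHb2.integrable one_le_two)
  have hecond : P[fun ω => Gf ω - Hb ω | m𝒢] =ᵐ[P] (fun _ => (0 : H)) := by
    have h := condExp_sub (μ := P) (m := m𝒢) (hG2.integrable one_le_two)
      (hHb2.integrable one_le_two) (f := Gf) (g := Hb)
    have h' : P[fun ω => Gf ω - Hb ω | m𝒢] =ᵐ[P] P[Gf | m𝒢] - P[Hb | m𝒢] := h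
    filter_upwards [h', hGcond] with ω h1 h2
    simp only [Pi.sub_apply] at h1
    rw [h1, hHbcond, h2, sub_self]
  -- integrability of the squares
  have intX2 : Integrable (fun ω => ‖GF (W ω)‖ ^ 2) P :=
    (memLp_two_iff_integrable_sq_norm hX2.1).mp hX2
  have intHb2 : Integrable (fun ω => ‖Hb ω‖ ^ 2) P :=
    (memLp_two_iff_integrable_sq_norm hHb2.1).mp hHb2
  have intE2 : Integrable (fun ω => ‖Gf ω - Hb ω‖ ^ 2) P :=
    (memLp_two_iff_integrable_sq_norm he2.1).mp he2
  have intG2 : Integrable (fun ω => ‖Gf ω‖ ^ 2) P :=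
    (memLp_two_iff_integrable_sq_norm hG2.1).mp hG2
  have intC2 : Integrable (fun ω => ‖GF (W ω) - Hb ω‖ ^ 2) P := by
    have := (hX2.sub hHb2)
    exact (memLp_two_iff_integrable_sq_norm this.1).mp this
  have intXG : Integrable (fun ω => ⟪GF (W ω), Gf ω⟫_ℝ) P := l2_integrable_inner hX2 hG2
  have intXH : Integrable (fun ω => ⟪GF (W ω), Hb ω⟫_ℝ) P := l2_integrable_inner hX2 hHb2
  have intHe : Integrable (fun ω => ⟪Hb ω, Gf ω - Hb ω⟫_ℝ) P := l2_integrable_inner hHb2 he2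
  -- key integral identities
  have I1 : ∫ ω, ⟪GF (W ω), Gf ω⟫_ℝ ∂P = ∫ ω, ⟪GF (W ω), Hb ω⟫_ℝ ∂P :=
    integral_inner_eq_of_condexp hm𝒢 hX_sm hX2 hG2 hHb2 hGcond
  have I2 : ∫ ω, ⟪Hb ω, Gf ω - Hb ω⟫_ℝ ∂P = 0 := by
    have h := integral_inner_eq_of_condexp hm𝒢 hHb_sm hHb2 he2 (memLp_const (0 : H)) hecond
    simpa using h
  have I3 : ∫ ω, ⟪GF (W ω), Hb ω⟫_ℝ ∂P
      = ((∫ ω, ‖GF (W ω)‖ ^ 2 ∂P) + (∫ ω, ‖Hb ω‖ ^ 2 ∂P)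
        - ∫ ω, ‖GF (W ω) - Hb ω‖ ^ 2 ∂P) / 2 := by
    have hpt : ∀ ω, ⟪GF (W ω), Hb ω⟫_ℝ
        = (‖GF (W ω)‖ ^ 2 + ‖Hb ω‖ ^ 2 - ‖GF (W ω) - Hb ω‖ ^ 2) / 2 := by
      intro ω
      have := norm_sub_sq_real (GF (W ω)) (Hb ω)
      linarith
    have intS : Integrable (fun ω => ‖GF (W ω)‖ ^ 2 + ‖Hb ω‖ ^ 2) P := intX2.add intHb2
    rw [integral_congr_ae (Filter.Eventually.of_forall hpt), integral_div,
      integral_sub intS intC2, integral_add intX2 intHb2]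
  have I4 : ∫ ω, ‖Gf ω‖ ^ 2 ∂P
      = (∫ ω, ‖Hb ω‖ ^ 2 ∂P) + ∫ ω, ‖Gf ω - Hb ω‖ ^ 2 ∂P := by
    have hpt : ∀ ω, ‖Gf ω‖ ^ 2
        = ‖Hb ω‖ ^ 2 + 2 * ⟪Hb ω, Gf ω - Hb ω⟫_ℝ + ‖Gf ω - Hb ω‖ ^ 2 := by
      intro ω
      have h := norm_add_sq_real (Hb ω) (Gf ω - Hb ω)
      rw [show Hb ω + (Gf ω - Hb ω) = Gf ω by abel] at h
      linarith
    have intT : Integrable (fun ω => ‖Hb ω‖ ^ 2 + 2 * ⟪Hb ω, Gf ω - Hb ω⟫_ℝ) P :=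
      intHb2.add (intHe.const_mul 2)
    rw [integral_congr_ae (Filter.Eventually.of_forall hpt),
      integral_add intT intE2, integral_add intHb2 (intHe.const_mul 2),
      integral_const_mul _ _, I2]
    ring
  -- pointwise descent
  have hdesc : ∀ ω, F (W ω - γ • Gf ω)
      ≤ F (W ω) - γ * ⟪GF (W ω), Gf ω⟫_ℝ + β / 2 * γ ^ 2 * ‖Gf ω‖ ^ 2 := by
    intro ω
    have h := descent_lemma hgrad hlip (W ω) (W ω - γ • Gf ω)
    rw [show W ω - γ • Gf ω - W ω = -(γ • Gf ω) by abel] at h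
    have h3 : ⟪GF (W ω), -(γ • Gf ω)⟫_ℝ = -(γ * ⟪GF (W ω), Gf ω⟫_ℝ) := by
      rw [inner_neg_right, real_inner_smul_right]
    have h4 : ‖-(γ • Gf ω)‖ ^ 2 = γ ^ 2 * ‖Gf ω‖ ^ 2 := by
      rw [norm_neg, norm_smul, mul_pow, Real.norm_eq_abs, sq_abs]
    rw [h3, h4] at h
    linarith
  -- integrate the descent inequality
  have intSub : Integrable (fun ω => F (W ω) - γ * ⟪GF (W ω), Gf ω⟫_ℝ) P :=
    hint1.sub (intXG.const_mul γ)
  have intSq : Integrable (fun ω => β / 2 * γ ^ 2 * ‖Gf ω‖ ^ 2) P := by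
    have := intG2.const_mul (β / 2 * γ ^ 2)
    refine this.congr (Filter.Eventually.of_forall fun ω => by ring)
  have intRHS : Integrable (fun ω => F (W ω) - γ * ⟪GF (W ω), Gf ω⟫_ℝ
      + β / 2 * γ ^ 2 * ‖Gf ω‖ ^ 2) P := intSub.add intSq
  have step1 : ∫ ω, F (W ω - γ • Gf ω) ∂P
      ≤ ∫ ω, (F (W ω) - γ * ⟪GF (W ω), Gf ω⟫_ℝ + β / 2 * γ ^ 2 * ‖Gf ω‖ ^ 2) ∂P :=
    integral_mono hint2 intRHS hdesc
  have step2 : ∫ ω, (F (W ω) - γ * ⟪GF (W ω), Gf ω⟫_ℝ + β / 2 * γ ^ 2 * ‖Gf ω‖ ^ 2) ∂P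
      = (∫ ω, F (W ω) ∂P) - γ * (∫ ω, ⟪GF (W ω), Gf ω⟫_ℝ ∂P)
        + β / 2 * γ ^ 2 * ∫ ω, ‖Gf ω‖ ^ 2 ∂P := by
    rw [integral_add intSub intSq, integral_sub hint1 (intXG.const_mul γ),
      integral_const_mul _ _, integral_const_mul _ _]
  -- final algebra
  have hB : (0:ℝ) ≤ ∫ ω, ‖Hb ω‖ ^ 2 ∂P := integral_nonneg fun ω => sq_nonneg _
  have hβγ : β * γ ≤ 1 := by
    rw [le_div_iff₀ hβ] at hγβ
    linarith
  set L := ∫ ω, F (W ω - γ • Gf ω) ∂P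
  set FW := ∫ ω, F (W ω) ∂P
  set A := ∫ ω, ‖GF (W ω)‖ ^ 2 ∂P
  set B := ∫ ω, ‖Hb ω‖ ^ 2 ∂P
  set C := ∫ ω, ‖GF (W ω) - Hb ω‖ ^ 2 ∂P
  set E := ∫ ω, ‖Gf ω - Hb ω‖ ^ 2 ∂P
  have key : L ≤ FW - γ * ((A + B - C) / 2) + β / 2 * γ ^ 2 * (B + E) := by
    calc L ≤ _ := step1
      _ = FW - γ * (∫ ω, ⟪GF (W ω), Gf ω⟫_ℝ ∂P) + β / 2 * γ ^ 2 * ∫ ω, ‖Gf ω‖ ^ 2 ∂P := step2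
      _ = FW - γ * ((A + B - C) / 2) + β / 2 * γ ^ 2 * (B + E) := by rw [I1, I3, I4]
  have hE2 : β / 2 * γ ^ 2 * E ≤ β / 2 * γ ^ 2 * σ2N := by
    apply mul_le_mul_of_nonneg_left hvar
    positivity
  have hBb : β / 2 * γ ^ 2 * B ≤ γ / 2 * B := by
    have : β * γ ^ 2 ≤ γ := by nlinarith
    nlinarith
  linarith


end AuxHSFL

/-- **Per-round descent inequality (Eqn. (eq:11) in the proof of Theorem 1).** One step
of averaged stochastic gradient descent with conditionally unbiased stochastic gradients
`g_n` (given the sub-σ-algebra `m𝒢` that measures the client models `w_n`), averaged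
variance bound `σ²/N`, and step size `0 < γ ≤ 1/β` satisfies
`E[f(w̄⁺)] ≤ E[f(w̄)] − (γ/2) E[‖∇f(w̄)‖²] + βγ²σ²/(2N)
  + (γ/2) E[‖∇f(w̄) − (1/N) Σ_n ∇f_n(w_n)‖²]`,
where `w̄ = (1/N) Σ_n w_n` and `w̄⁺ = w̄ − γ (1/N) Σ_n g_n`. -/
theorem hsfl_descent_inequality
    {H : Type*} [NormedAddCommGroup H] [InnerProductSpace ℝ H] [FiniteDimensional ℝ H]
    (β : ℝ) (hβ : 0 < β) {N : ℕ} (hN : 1 ≤ N)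
    (f : Fin N → H → ℝ)
    (hdiff : ∀ n, Differentiable ℝ (f n))
    (hsmooth : ∀ n (u v : H), ‖gradient (f n) u - gradient (f n) v‖ ≤ β * ‖u - v‖)
    (γ : ℝ) (hγ0 : 0 < γ) (hγβ : γ ≤ 1 / β)
    (σ : ℝ) (hσ : 0 ≤ σ)
    {Ω : Type*} {mΩ : MeasurableSpace Ω} (P : Measure Ω) [IsProbabilityMeasure P]
    (m𝒢 : MeasurableSpace Ω) (hm𝒢 : m𝒢 ≤ mΩ)
    (w : Fin N → Ω → H)
    (hwmeas : ∀ n, StronglyMeasurable[m𝒢] (w n))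
    (hwL2 : ∀ n, MemLp (w n) 2 P)
    (g : Fin N → Ω → H)
    (hgL2 : ∀ n, MemLp (g n) 2 P)
    (hunbiased : ∀ n, P[g n | m𝒢] =ᵐ[P] fun ω => gradient (f n) (w n ω))
    (hvar : ∫ ω, ‖(N : ℝ)⁻¹ • ∑ n, (g n ω - gradient (f n) (w n ω))‖ ^ 2 ∂P ≤ σ ^ 2 / N)
    (hint1 : Integrable
      (fun ω => (N : ℝ)⁻¹ * ∑ n, f n ((N : ℝ)⁻¹ • ∑ n', w n' ω)) P)
    (hint2 : Integrable
      (fun ω => (N : ℝ)⁻¹ * ∑ n, f n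
        ((N : ℝ)⁻¹ • ∑ n', w n' ω - γ • ((N : ℝ)⁻¹ • ∑ n', g n' ω))) P) :
    ∫ ω, (N : ℝ)⁻¹ * ∑ n, f n
        ((N : ℝ)⁻¹ • ∑ n', w n' ω - γ • ((N : ℝ)⁻¹ • ∑ n', g n' ω)) ∂P
      ≤ (∫ ω, (N : ℝ)⁻¹ * ∑ n, f n ((N : ℝ)⁻¹ • ∑ n', w n' ω) ∂P)
        - (γ / 2) * ∫ ω, ‖gradient (fun x => (N : ℝ)⁻¹ * ∑ n, f n x)
            ((N : ℝ)⁻¹ • ∑ n', w n' ω)‖ ^ 2 ∂P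
        + β * γ ^ 2 * σ ^ 2 / (2 * N)
        + (γ / 2) * ∫ ω, ‖gradient (fun x => (N : ℝ)⁻¹ * ∑ n, f n x)
              ((N : ℝ)⁻¹ • ∑ n', w n' ω)
            - (N : ℝ)⁻¹ • ∑ n, gradient (f n) (w n ω)‖ ^ 2 ∂P := by
  have hNR : (0:ℝ) < (N:ℝ) := by exact_mod_cast Nat.lt_of_lt_of_le Nat.zero_lt_one hN
  -- gradient of the average
  have hgradeq : ∀ x, gradient (fun x => (N : ℝ)⁻¹ * ∑ n, f n x) x
      = (N : ℝ)⁻¹ • ∑ n, gradient (f n) x := fun x => (grad_avg f hdiff x).gradient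
  have hgrad : ∀ x, HasGradientAt (fun x => (N : ℝ)⁻¹ * ∑ n, f n x)
      ((N : ℝ)⁻¹ • ∑ n, gradient (f n) x) x := grad_avg f hdiff
  -- Lipschitz bound for the averaged gradient
  have hlip : ∀ u v, ‖((N : ℝ)⁻¹ • ∑ n, gradient (f n) u)
      - (N : ℝ)⁻¹ • ∑ n, gradient (f n) v‖ ≤ β * ‖u - v‖ := by
    intro u v
    rw [← smul_sub, ← Finset.sum_sub_distrib, norm_smul, Real.norm_eq_abs,
      abs_of_pos (inv_pos.2 hNR)]
    calc (N:ℝ)⁻¹ * ‖∑ n, (gradient (f n) u - gradient (f n) v)‖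
        ≤ (N:ℝ)⁻¹ * ∑ n, ‖gradient (f n) u - gradient (f n) v‖ := by
          gcongr
          exact norm_sum_le _ _
      _ ≤ (N:ℝ)⁻¹ * ∑ _n : Fin N, (β * ‖u - v‖) := by
          gcongr with n
          exact hsmooth n u v
      _ = β * ‖u - v‖ := by
          rw [Finset.sum_const, Finset.card_univ, Fintype.card_fin, nsmul_eq_mul]
          field_simp
  -- continuity of the gradients
  have hcont : ∀ n, Continuous (gradient (f n)) := by
    intro n
    have : LipschitzWith (Real.toNNReal β) (gradient (f n)) := by
      refine LipschitzWith.of_dist_le_mul fun u v => ?_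
      rw [dist_eq_norm, dist_eq_norm, Real.coe_toNNReal β hβ.le]
      exact hsmooth n u v
    exact this.continuous
  -- measurability and integrability of the building blocks
  have hgw_sm : ∀ n, StronglyMeasurable[m𝒢] (fun ω => gradient (f n) (w n ω)) :=
    fun n => (hcont n).comp_stronglyMeasurable (hwmeas n)
  have hgw_L2 : ∀ n, MemLp (fun ω => gradient (f n) (w n ω)) 2 P := by
    intro n
    have haesm : AEStronglyMeasurable[mΩ] (fun ω => gradient (f n) (w n ω)) P :=
      ((hgw_sm n).mono hm𝒢).aestronglyMeasurable
    have h1 : MemLp (fun ω => gradient (f n) (w n ω) - gradient (f n) 0) 2 P := by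
      refine (hwL2 n).of_le_mul (c := β) (haesm.sub aestronglyMeasurable_const)
        (Filter.Eventually.of_forall fun ω => ?_)
      simpa using hsmooth n (w n ω) 0
    have h2 := h1.add (memLp_const (gradient (f n) 0))
    have : (fun ω => gradient (f n) (w n ω) - gradient (f n) 0) + (fun _ => gradient (f n) 0)
        = fun ω => gradient (f n) (w n ω) := by
      funext ω; simp
    rwa [this] at h2
  have hW_sm : StronglyMeasurable[m𝒢] (fun ω => (N : ℝ)⁻¹ • ∑ n', w n' ω) :=
    (Finset.stronglyMeasurable_fun_sum Finset.univ fun n _ => hwmeas n).const_smul _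
  have hW2 : MemLp (fun ω => (N : ℝ)⁻¹ • ∑ n', w n' ω) 2 P := by
    have := (memLp_finsetSum Finset.univ (fun n (_ : n ∈ Finset.univ) => hwL2 n)).const_smul
      ((N : ℝ)⁻¹)
    exact this
  have hG2 : MemLp (fun ω => (N : ℝ)⁻¹ • ∑ n', g n' ω) 2 P := by
    have := (memLp_finsetSum Finset.univ (fun n (_ : n ∈ Finset.univ) => hgL2 n)).const_smul
      ((N : ℝ)⁻¹)
    exact this
  have hHb_sm : StronglyMeasurable[m𝒢] (fun ω => (N : ℝ)⁻¹ • ∑ n, gradient (f n) (w n ω)) :=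
    (Finset.stronglyMeasurable_fun_sum Finset.univ fun n _ => hgw_sm n).const_smul _
  have hHb2 : MemLp (fun ω => (N : ℝ)⁻¹ • ∑ n, gradient (f n) (w n ω)) 2 P := by
    have := (memLp_finsetSum Finset.univ (fun n (_ : n ∈ Finset.univ) => hgw_L2 n)).const_smul
      ((N : ℝ)⁻¹)
    exact this
  -- conditional expectation of the averaged stochastic gradient
  have hGcond : P[fun ω => (N : ℝ)⁻¹ • ∑ n', g n' ω | m𝒢]
      =ᵐ[P] fun ω => (N : ℝ)⁻¹ • ∑ n, gradient (f n) (w n ω) := by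
    have hsum : P[fun ω => ∑ n', g n' ω | m𝒢]
        =ᵐ[P] fun ω => ∑ n', gradient (f n') (w n' ω) := by
      have h2 : P[∑ n', g n' | m𝒢] =ᵐ[P] ∑ n', P[g n' | m𝒢] :=
        condExp_finsetSum (fun n _ => (hgL2 n).integrable one_le_two) m𝒢
      have hL : (fun ω => ∑ n', g n' ω) = (∑ n', g n' : Ω → H) :=
        funext fun ω => (Finset.sum_apply _ _ _).symm
      have key : ∀ᵐ ω ∂P, ∀ n, (P[g n | m𝒢]) ω = gradient (f n) (w n ω) :=
        (MeasureTheory.ae_all_iff).2 hunbiased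
      rw [hL]
      filter_upwards [h2, key] with ω h2ω keyω
      rw [h2ω]
      simp only [Finset.sum_apply]
      exact Finset.sum_congr rfl fun n _ => keyω n
    have h1 : P[fun ω => (N : ℝ)⁻¹ • ∑ n', g n' ω | m𝒢]
        =ᵐ[P] (N : ℝ)⁻¹ • P[fun ω => ∑ n', g n' ω | m𝒢] :=
      condExp_smul ((N : ℝ)⁻¹) (fun ω => ∑ n', g n' ω) m𝒢
    filter_upwards [h1, hsum] with ω hω1 hω2
    rw [hω1]
    show (N : ℝ)⁻¹ • (P[fun ω => ∑ n', g n' ω | m𝒢]) ω = _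
    rw [hω2]
  -- the variance bound in the required form
  have hvar' : ∫ ω, ‖((N : ℝ)⁻¹ • ∑ n', g n' ω)
      - (N : ℝ)⁻¹ • ∑ n, gradient (f n) (w n ω)‖ ^ 2 ∂P ≤ σ ^ 2 / N := by
    have hpt : (fun ω => ‖((N : ℝ)⁻¹ • ∑ n', g n' ω)
        - (N : ℝ)⁻¹ • ∑ n, gradient (f n) (w n ω)‖ ^ 2)
        = fun ω => ‖(N : ℝ)⁻¹ • ∑ n, (g n ω - gradient (f n) (w n ω))‖ ^ 2 := by
      funext ω
      rw [← smul_sub, ← Finset.sum_sub_distrib]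
    rw [hpt]
    exact hvar
  -- conclude
  simp only [hgradeq]
  rw [show β * γ ^ 2 * σ ^ 2 / (2 * (N:ℝ)) = β * γ ^ 2 * (σ ^ 2 / N) / 2 by ring]
  exact aux_descent hβ hγ0 hγβ hm𝒢 hgrad hlip hW_sm hW2 hG2 hHb_sm hHb2 hGcond hvar'
    hint1 hint2
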